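/- For every t ∈ [T], the fourth moment of the GMM score satisfies E[ ‖s_t^{⋆GMM}(X_t^GMM)‖₂⁴ ] ≤ C ( d / (1 − ᾱ_t) )² for some absolute constant C > 0. -/

import Mathlib

open MeasureTheory Real Finset
open scoped RealInnerProductSpace BigOperators

noncomputable section

/-- Density of the Gaussian distribution `N(m, v I_d)` on `ℝ^d`. -/
def gaussV (d : ℕ) (v : ℝ) (m x : EuclideanSpace ℝ (Fin d)) : ℝ :=
  (2 * Real.pi * v) ^ (-(d : ℝ) / 2) * Real.exp (-‖x - m‖ ^ 2 / (2 * v))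

/-- Density of the Gaussian mixture `∑_k w_k N(√abar μ_k, I_d)`. -/
def mixDensity (d K : ℕ) (w : Fin K → ℝ) (μ : Fin K → EuclideanSpace ℝ (Fin d))
    (abar : ℝ) (x : EuclideanSpace ℝ (Fin d)) : ℝ :=
  ∑ k, w k * gaussV d 1 (Real.sqrt abar • μ k) x

/-- Posterior component weights `π_k^{(t)}(x)`. -/
def postWeight (d K : ℕ) (w : Fin K → ℝ) (μ : Fin K → EuclideanSpace ℝ (Fin d))
    (abar : ℝ) (k : Fin K) (x : EuclideanSpace ℝ (Fin d)) : ℝ :=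
  w k * Real.exp (-‖x - Real.sqrt abar • μ k‖ ^ 2 / 2) /
    ∑ i, w i * Real.exp (-‖x - Real.sqrt abar • μ i‖ ^ 2 / 2)

/-- Closed form of the score `∇ log p_{X_t^GMM}` of the diffused GMM. -/
def gmmScore (d K : ℕ) (w : Fin K → ℝ) (μ : Fin K → EuclideanSpace ℝ (Fin d))
    (abar : ℝ) (x : EuclideanSpace ℝ (Fin d)) : EuclideanSpace ℝ (Fin d) :=
  -x + Real.sqrt abar • ∑ k, postWeight d K w μ abar k x • μ k

/-- The Jacobian matrix `J_t(x)` of the diffused GMM score. -/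
def gmmJac (d K : ℕ) (w : Fin K → ℝ) (μ : Fin K → EuclideanSpace ℝ (Fin d))
    (abar : ℝ) (x : EuclideanSpace ℝ (Fin d)) : Matrix (Fin d) (Fin d) ℝ :=
  Matrix.of fun i j =>
    (if i = j then (-1 : ℝ) else 0) +
      abar * ((∑ k, postWeight d K w μ abar k x * (μ k i * μ k j)) -
        (∑ k, postWeight d K w μ abar k x * μ k i) *
          (∑ k, postWeight d K w μ abar k x * μ k j))

/-- The quantity `ζ_k^{(t)}(x)`, where `abar` plays the role of `ᾱ_t` and `a` that of `α_t`. -/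
def zeta (d K : ℕ) (w : Fin K → ℝ) (μ : Fin K → EuclideanSpace ℝ (Fin d))
    (abar a : ℝ) (k : Fin K) (x : EuclideanSpace ℝ (Fin d)) : ℝ :=
  (1 - a ^ 2) / (2 * a ^ 2) *
      (‖x - Real.sqrt abar • μ k‖ ^ 2 -
        ∑ i, postWeight d K w μ abar i x * ‖x - Real.sqrt abar • μ i‖ ^ 2) +
    (1 - a) / a ^ 2 *
      ⟪gmmScore d K w μ abar x,
        ∑ i, postWeight d K w μ abar i x • (Real.sqrt abar • (μ i - μ k))⟫

/-- The typical set `E_t`. -/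
def Eset (d K T : ℕ) (w : Fin K → ℝ) (μ : Fin K → EuclideanSpace ℝ (Fin d))
    (abar a C₁ C₂ : ℝ) : Set (EuclideanSpace ℝ (Fin d)) :=
  {x | Matrix.trace (1 + gmmJac d K w μ abar x) ≤ C₁ * Real.log ((K : ℝ) * T) ∧
    ∑ k, postWeight d K w μ abar k x * Real.exp (-(zeta d K w μ abar a k x)) ≤
      Real.exp (C₂ * (1 - a) ^ 2 * Real.log ((K : ℝ) * T) ^ 2)}

/-- The set `A_t`. -/
def Aset (d K T : ℕ) (w : Fin K → ℝ) (μ : Fin K → EuclideanSpace ℝ (Fin d))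
    (abar cR C₇ : ℝ) : Set (EuclideanSpace ℝ (Fin d)) :=
  {x | -(C₇ * d * Real.log ((d : ℝ) * T)) ≤ Real.log (mixDensity d K w μ abar x) ∧
    ‖x‖ ≤ Real.sqrt (2 * (T : ℝ) ^ (2 * cR) + 16 * d * Real.log T)}

/-- The set `T_k`. -/
def Tset (d K T : ℕ) (μ : Fin K → EuclideanSpace ℝ (Fin d))
    (abar C₅ : ℝ) (k : Fin K) : Set (EuclideanSpace ℝ (Fin d)) :=
  {x | ∀ i : Fin K,
    |⟪x - Real.sqrt abar • μ k, Real.sqrt abar • (μ i - μ k)⟫| ≤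
      C₅ * Real.sqrt (abar * Real.log ((K : ℝ) * T)) * ‖μ i - μ k‖}

/-- Forward (diffused) marginal density at noise level `abar`, starting from density `f₀`. -/
def fwdDensity (d : ℕ) (f₀ : EuclideanSpace ℝ (Fin d) → ℝ) (abar : ℝ)
    (x : EuclideanSpace ℝ (Fin d)) : ℝ :=
  ∫ y, gaussV d (1 - abar) (Real.sqrt abar • y) x * f₀ y

/-- Stein score of a density `p`. -/
def scoreOf (d : ℕ) (p : EuclideanSpace ℝ (Fin d) → ℝ)
    (x : EuclideanSpace ℝ (Fin d)) : EuclideanSpace ℝ (Fin d) :=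
  gradient (fun y => Real.log (p y)) x

/-- Truncation (clipping) of a score estimate at radius `R`. -/
def clipFn (d : ℕ) (R : ℝ) (s : EuclideanSpace ℝ (Fin d) → EuclideanSpace ℝ (Fin d))
    (x : EuclideanSpace ℝ (Fin d)) : EuclideanSpace ℝ (Fin d) :=
  if ‖s x‖ ≤ R then s x else 0

/-- Total-variation distance between two densities on `ℝ^d`. -/
def tvDist (d : ℕ) (p q : EuclideanSpace ℝ (Fin d) → ℝ) : ℝ :=
  (1 / 2) * ∫ x, |p x - q x|

/-- Density of the one-step (DDPM-type) reverse Gaussian transition with rate `a`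
and drift field `s`, from `y` to `x`. -/
def ddpmKernel (d : ℕ) (a : ℝ) (s : EuclideanSpace ℝ (Fin d) → EuclideanSpace ℝ (Fin d))
    (y x : EuclideanSpace ℝ (Fin d)) : ℝ :=
  gaussV d (1 - a) ((Real.sqrt a)⁻¹ • (y + (1 - a) • s y)) x

/-- Density of `Y_{T-n}` for the DDPM sampler run with rates `α` and score estimates `s`. -/
def ddpmDensity (d T : ℕ) (α : ℕ → ℝ)
    (s : ℕ → EuclideanSpace ℝ (Fin d) → EuclideanSpace ℝ (Fin d)) :
    ℕ → EuclideanSpace ℝ (Fin d) → ℝ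
  | 0 => gaussV d 1 0
  | n + 1 => fun x =>
      ∫ y, ddpmKernel d (α (T - n)) (s (T - n)) y x * ddpmDensity d T α s n y

/-- Density (on `ℝ^d`) of `Ȳ_{T-n}^-` for the auxiliary reverse process. -/
def pbarMinus (d K T : ℕ) (w : Fin K → ℝ) (μ : Fin K → EuclideanSpace ℝ (Fin d))
    (αbar α : ℕ → ℝ) (C₁ C₂ : ℝ) : ℕ → EuclideanSpace ℝ (Fin d) → ℝ
  | 0 => (Eset d K T w μ (αbar T) (α T) C₁ C₂).indicator (gaussV d 1 0)
  | n + 1 =>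
      (Eset d K T w μ (αbar (T - n)) (α (T - n)) C₁ C₂).indicator fun x =>
        ∫ y in Eset d K T w μ (αbar (T - n)) (α (T - n)) C₁ C₂,
          ddpmKernel d (α (T - n)) (gmmScore d K w μ (αbar (T - n))) y x *
            min (mixDensity d K w μ (αbar (T - n)) y)
              (pbarMinus d K T w μ αbar α C₁ C₂ n y)

/-- The function `Δ_t(x) = p_{X_t^GMM}(x) - p_{Ȳ_t}(x)`. -/
def DeltaFn (d K T : ℕ) (w : Fin K → ℝ) (μ : Fin K → EuclideanSpace ℝ (Fin d))
    (αbar α : ℕ → ℝ) (C₁ C₂ : ℝ) (t : ℕ) (x : EuclideanSpace ℝ (Fin d)) : ℝ :=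
  mixDensity d K w μ (αbar t) x -
    min (mixDensity d K w μ (αbar t) x) (pbarMinus d K T w μ αbar α C₁ C₂ (T - t) x)

end

lemma momInt (q : ℕ) : Integrable (fun x : ℝ => x ^ q * Real.exp (-x ^ 2 / 2)) := by
  have h := integrable_rpow_mul_exp_neg_mul_sq (b := 1/2) one_half_pos
    (s := (q : ℝ)) (by linarith [Nat.cast_nonneg (α := ℝ) q])
  convert h using 2 with x
  rw [Real.rpow_natCast]
  ring_nf

lemma momIoi (q : ℕ) : ∫ x in Set.Ioi (0:ℝ), x ^ q * Real.exp (-x ^ 2 / 2)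
    = (2:ℝ) ^ (((q:ℝ) + 1) / 2) * (1 / 2) * Real.Gamma (((q:ℝ) + 1) / 2) := by
  have h := integral_rpow_mul_exp_neg_mul_rpow (p := 2) (q := (q:ℝ)) (b := 1/2)
    two_pos (by linarith [Nat.cast_nonneg (α := ℝ) q]) one_half_pos
  have e1 : ∀ x ∈ Set.Ioi (0:ℝ), x ^ (q:ℝ) * Real.exp (-(1/2) * x ^ (2:ℝ))
      = x ^ q * Real.exp (-x ^ 2 / 2) := by
    intro x hx
    rw [Real.rpow_natCast, show (2:ℝ) = ((2:ℕ):ℝ) by norm_num, Real.rpow_natCast]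
    ring_nf
  rw [setIntegral_congr_fun measurableSet_Ioi e1] at h
  rw [h]
  congr 1
  rw [show ((1:ℝ)/2) = (2:ℝ)⁻¹ by norm_num,
    Real.inv_rpow (by norm_num), ← Real.rpow_neg (by norm_num), neg_div, neg_neg]

lemma momR (q : ℕ) (hq : Even q) : ∫ x : ℝ, x ^ q * Real.exp (-x ^ 2 / 2)
    = (2:ℝ) ^ (((q:ℝ) + 1) / 2) * Real.Gamma (((q:ℝ) + 1) / 2) := by
  have he : ∀ x : ℝ, |x| ^ q * Real.exp (-|x| ^ 2 / 2) = x ^ q * Real.exp (-x ^ 2 / 2) := by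
    intro x
    rw [hq.pow_abs, sq_abs]
  calc ∫ x : ℝ, x ^ q * Real.exp (-x ^ 2 / 2)
      = ∫ x : ℝ, (fun y : ℝ => y ^ q * Real.exp (-y ^ 2 / 2)) |x| := by
        simp only [he]
    _ = 2 * ∫ x in Set.Ioi (0:ℝ), x ^ q * Real.exp (-x ^ 2 / 2) :=
        integral_comp_abs (f := fun y : ℝ => y ^ q * Real.exp (-y ^ 2 / 2))
    _ = _ := by rw [momIoi]; ring

lemma mom0 : ∫ x : ℝ, Real.exp (-x ^ 2 / 2) = Real.sqrt (2 * π) := by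
  have h := momR 0 Even.zero
  simp only [pow_zero, one_mul, Nat.cast_zero, zero_add] at h
  rw [h]
  rw [Real.Gamma_one_half_eq, Real.sqrt_eq_rpow, Real.sqrt_eq_rpow,
    Real.mul_rpow (by norm_num) (by positivity)]

lemma mom2 : ∫ x : ℝ, x ^ 2 * Real.exp (-x ^ 2 / 2) = Real.sqrt (2 * π) := by
  have h := momR 2 even_two
  rw [h]
  have h32 : ((2:ℝ) + 1) / 2 = 1/2 + 1 := by norm_num
  rw [Nat.cast_ofNat, h32, Real.Gamma_add_one (by norm_num)]
  rw [Real.Gamma_one_half_eq, show (1:ℝ)/2 + 1 = 3/2 by norm_num]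
  rw [show (3:ℝ)/2 = 1 + 1/2 by norm_num, Real.rpow_add (by norm_num), Real.rpow_one,
    Real.sqrt_eq_rpow, Real.sqrt_eq_rpow, Real.mul_rpow (by norm_num) (by positivity)]
  ring

lemma mom4 : ∫ x : ℝ, x ^ 4 * Real.exp (-x ^ 2 / 2) = 3 * Real.sqrt (2 * π) := by
  have h := momR 4 (by decide)
  rw [h]
  have h52 : ((4:ℝ) + 1) / 2 = 3/2 + 1 := by norm_num
  rw [Nat.cast_ofNat, h52, Real.Gamma_add_one (by norm_num),
    show (3:ℝ)/2 = 1/2 + 1 by norm_num, Real.Gamma_add_one (by norm_num),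
    Real.Gamma_one_half_eq]
  rw [show (1:ℝ)/2 + 1 + 1 = 2 + 1/2 by norm_num, Real.rpow_add (by norm_num),
    Real.sqrt_eq_rpow, Real.sqrt_eq_rpow, Real.mul_rpow (by norm_num) (by positivity)]
  norm_num
  ring

noncomputable def phi (u : ℝ) : ℝ := (Real.sqrt (2 * π))⁻¹ * Real.exp (-u ^ 2 / 2)

lemma phi_nonneg (u : ℝ) : 0 ≤ phi u := by
  unfold phi; positivity

lemma phi_int : Integrable phi := by
  have h := (momInt 0).const_mul (Real.sqrt (2 * π))⁻¹
  apply h.congr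
  filter_upwards with u
  unfold phi; ring

lemma sqrt2pi_ne : Real.sqrt (2 * π) ≠ 0 := by
  positivity

lemma phi_integral : ∫ u : ℝ, phi u = 1 := by
  unfold phi
  rw [integral_const_mul, mom0, inv_mul_cancel₀ sqrt2pi_ne]

lemma phi4_int : Integrable (fun u : ℝ => u ^ 4 * phi u) := by
  have h := (momInt 4).const_mul (Real.sqrt (2 * π))⁻¹
  apply h.congr
  filter_upwards with u
  unfold phi; ring

lemma phi4_integral : ∫ u : ℝ, u ^ 4 * phi u = 3 := by
  have e : (fun u : ℝ => u ^ 4 * phi u) = fun u : ℝ =>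
      (Real.sqrt (2 * π))⁻¹ * (u ^ 4 * Real.exp (-u ^ 2 / 2)) := by
    funext u; unfold phi; ring
  rw [e, integral_const_mul, mom4, ← mul_assoc, mul_comm _ (3:ℝ), mul_assoc,
    inv_mul_cancel₀ sqrt2pi_ne, mul_one]

lemma g_eq (d : ℕ) (i : Fin d) (y : Fin d → ℝ) : (y i) ^ 4 * ∏ k, phi (y k)
    = ∏ k, (if k = i then (y k) ^ 4 else 1) * phi (y k) := by
  rw [Finset.prod_mul_distrib, Finset.prod_ite_eq' Finset.univ i (fun k => (y k) ^ 4)]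
  simp

lemma g_int (d : ℕ) (i : Fin d) :
    Integrable (fun y : Fin d → ℝ => (y i) ^ 4 * ∏ k, phi (y k)) := by
  simp only [g_eq]
  apply MeasureTheory.Integrable.fintype_prod
    (f := fun k (u : ℝ) => (if k = i then u ^ 4 else 1) * phi u)
  intro k
  by_cases hk : k = i
  · simp only [hk, if_pos rfl]
    exact phi4_int
  · simp only [if_neg hk, one_mul]
    exact phi_int

lemma g_integral (d : ℕ) (i : Fin d) :
    ∫ y : Fin d → ℝ, (y i) ^ 4 * ∏ k, phi (y k) = 3 := by
  simp only [g_eq]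
  rw [MeasureTheory.integral_fintype_prod_volume_eq_prod
    (f := fun k (u : ℝ) => (if k = i then u ^ 4 else 1) * phi u)]
  have e2 : ∀ k : Fin d, (∫ u : ℝ, (if k = i then u ^ 4 else 1) * phi u)
      = if k = i then (3:ℝ) else 1 := by
    intro k
    by_cases hk : k = i
    · simp only [hk, if_pos rfl]; exact phi4_integral
    · simp only [if_neg hk, one_mul]; exact phi_integral
  rw [Finset.prod_congr rfl (fun k _ => e2 k),
    Finset.prod_ite_eq' Finset.univ i (fun _ => (3:ℝ))]
  simp

lemma H_int (d : ℕ) :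
    Integrable (fun y : Fin d → ℝ => ∑ i, (d:ℝ) * ((y i) ^ 4 * ∏ k, phi (y k))) := by
  apply MeasureTheory.integrable_finset_sum
  intro i _
  exact (g_int d i).const_mul _

lemma H_integral (d : ℕ) :
    ∫ y : Fin d → ℝ, ∑ i, (d:ℝ) * ((y i) ^ 4 * ∏ k, phi (y k)) = 3 * (d:ℝ) ^ 2 := by
  rw [MeasureTheory.integral_finset_sum _ (fun i _ => (g_int d i).const_mul _)]
  have : ∀ i : Fin d, (∫ y : Fin d → ℝ, (d:ℝ) * ((y i) ^ 4 * ∏ k, phi (y k))) = (d:ℝ) * 3 := by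
    intro i
    rw [MeasureTheory.integral_const_mul, g_integral]
  rw [Finset.sum_congr rfl (fun i _ => this i)]
  simp [Finset.sum_const]
  ring


lemma phi_cont : Continuous phi := by
  unfold phi; fun_prop

lemma norm_sq_eq_sum (d : ℕ) (x : EuclideanSpace ℝ (Fin d)) :
    ‖x‖ ^ 2 = ∑ i, (x i) ^ 2 := by
  rw [EuclideanSpace.norm_eq, Real.sq_sqrt (by positivity)]
  simp [sq_abs]

lemma const_pow_eq (d : ℕ) : ((Real.sqrt (2 * π))⁻¹) ^ d = (2 * π) ^ (-(d:ℝ)/2) := by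
  rw [← Real.rpow_natCast ((Real.sqrt (2 * π))⁻¹) d, Real.sqrt_eq_rpow,
    ← Real.rpow_neg (by positivity), ← Real.rpow_mul (by positivity)]
  congr 1
  ring

lemma gauss0_eq_prod (d : ℕ) (x : EuclideanSpace ℝ (Fin d)) :
    gaussV d 1 0 x = ∏ k, phi (x k) := by
  have hr : ∏ k, phi (x k)
      = ((Real.sqrt (2 * π))⁻¹) ^ d * Real.exp (-(∑ i, (x i) ^ 2) / 2) := by
    unfold phi
    rw [Finset.prod_mul_distrib, Finset.prod_const, Finset.card_univ, Fintype.card_fin,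
      ← Real.exp_sum]
    congr 1
    rw [neg_div, ← Finset.sum_div, Finset.sum_neg_distrib, neg_div]
  rw [hr, const_pow_eq]
  unfold gaussV
  rw [sub_zero, norm_sq_eq_sum]
  norm_num

lemma F_cont (d : ℕ) :
    Continuous (fun y : Fin d → ℝ => (∑ i, (y i) ^ 2) ^ 2 * ∏ k, phi (y k)) := by
  exact ((continuous_finset_sum _ fun i _ => (continuous_apply i).pow 2).pow 2).mul
    (continuous_finset_prod _ fun k _ => phi_cont.comp (continuous_apply k))

lemma F_le_H (d : ℕ) (y : Fin d → ℝ) :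
    (∑ i, (y i) ^ 2) ^ 2 * ∏ k, phi (y k) ≤ ∑ i, (d:ℝ) * ((y i) ^ 4 * ∏ k, phi (y k)) := by
  have h1 : (∑ i, (y i) ^ 2) ^ 2 ≤ (d:ℝ) * ∑ i, (y i) ^ 4 := by
    have := sq_sum_le_card_mul_sum_sq (s := Finset.univ) (f := fun i : Fin d => (y i) ^ 2)
    simpa [← pow_mul] using this
  calc (∑ i, (y i) ^ 2) ^ 2 * ∏ k, phi (y k)
      ≤ ((d:ℝ) * ∑ i, (y i) ^ 4) * ∏ k, phi (y k) := by
        apply mul_le_mul_of_nonneg_right h1 (Finset.prod_nonneg fun k _ => phi_nonneg _)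
    _ = ∑ i, (d:ℝ) * ((y i) ^ 4 * ∏ k, phi (y k)) := by
        rw [mul_assoc, Finset.sum_mul, Finset.mul_sum]

lemma F_int (d : ℕ) :
    Integrable (fun y : Fin d → ℝ => (∑ i, (y i) ^ 2) ^ 2 * ∏ k, phi (y k)) := by
  apply (H_int d).mono' (F_cont d).aestronglyMeasurable
  filter_upwards with y
  rw [Real.norm_of_nonneg
    (mul_nonneg (by positivity) (Finset.prod_nonneg fun k _ => phi_nonneg _))]
  exact F_le_H d y

lemma h_eq_comp (d : ℕ) : (fun x : EuclideanSpace ℝ (Fin d) => ‖x‖ ^ 4 * gaussV d 1 0 x)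
    = (fun y : Fin d → ℝ => (∑ i, (y i) ^ 2) ^ 2 * ∏ k, phi (y k))
      ∘ ((MeasurableEquiv.toLp 2 (Fin d → ℝ)).symm) := by
  funext x
  simp only [Function.comp_apply]
  congr 1
  · rw [show (4:ℕ) = 2 * 2 from rfl, pow_mul, norm_sq_eq_sum]
    rfl
  · rw [gauss0_eq_prod]
    rfl

lemma h_int (d : ℕ) :
    Integrable (fun x : EuclideanSpace ℝ (Fin d) => ‖x‖ ^ 4 * gaussV d 1 0 x) := by
  rw [h_eq_comp,
    (EuclideanSpace.volume_preserving_symm_measurableEquiv_toLp (Fin d)).integrable_comp_emb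
      (MeasurableEquiv.measurableEmbedding _)]
  exact F_int d

lemma h_integral_le (d : ℕ) :
    ∫ x : EuclideanSpace ℝ (Fin d), ‖x‖ ^ 4 * gaussV d 1 0 x ≤ 3 * (d:ℝ) ^ 2 := by
  have e1 : ∫ x : EuclideanSpace ℝ (Fin d), ‖x‖ ^ 4 * gaussV d 1 0 x
      = ∫ y : Fin d → ℝ, (∑ i, (y i) ^ 2) ^ 2 * ∏ k, phi (y k) := by
    rw [h_eq_comp]
    exact (EuclideanSpace.volume_preserving_symm_measurableEquiv_toLp (Fin d)).integral_comp
      (MeasurableEquiv.measurableEmbedding _) (fun y : Fin d → ℝ => (∑ i, (y i) ^ 2) ^ 2 * ∏ k, phi (y k))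
  rw [e1, ← H_integral d]
  exact integral_mono (F_int d) (H_int d) (F_le_H d)

section gmmAux

variable {d K : ℕ} {w : Fin K → ℝ} {μ : Fin K → EuclideanSpace ℝ (Fin d)} {ab : ℝ}

lemma gaussV_nonneg (d : ℕ) (m x : EuclideanSpace ℝ (Fin d)) : 0 ≤ gaussV d 1 m x := by
  unfold gaussV
  exact mul_nonneg (Real.rpow_nonneg (by positivity) _) (Real.exp_pos _).le

lemma mix_nonneg (hw : ∀ k, 0 < w k) (x : EuclideanSpace ℝ (Fin d)) :
    0 ≤ mixDensity d K w μ ab x :=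
  Finset.sum_nonneg fun k _ => mul_nonneg (hw k).le (gaussV_nonneg _ _ _)

lemma D_pos [Nonempty (Fin K)] (hw : ∀ k, 0 < w k) (x : EuclideanSpace ℝ (Fin d)) :
    0 < ∑ i, w i * Real.exp (-‖x - Real.sqrt ab • μ i‖ ^ 2 / 2) :=
  Finset.sum_pos (fun i _ => mul_pos (hw i) (Real.exp_pos _)) Finset.univ_nonempty

lemma post_nonneg [Nonempty (Fin K)] (hw : ∀ k, 0 < w k) (k : Fin K)
    (x : EuclideanSpace ℝ (Fin d)) : 0 ≤ postWeight d K w μ ab k x :=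
  div_nonneg (mul_nonneg (hw k).le (Real.exp_pos _).le) (D_pos hw x).le

lemma post_sum [Nonempty (Fin K)] (hw : ∀ k, 0 < w k) (x : EuclideanSpace ℝ (Fin d)) :
    ∑ k, postWeight d K w μ ab k x = 1 := by
  unfold postWeight
  rw [← Finset.sum_div, div_self (D_pos hw x).ne']

lemma score_eq [Nonempty (Fin K)] (hw : ∀ k, 0 < w k) (x : EuclideanSpace ℝ (Fin d)) :
    gmmScore d K w μ ab x
      = ∑ k, postWeight d K w μ ab k x • (Real.sqrt ab • μ k - x) := by
  have h1 : ∑ k, postWeight d K w μ ab k x • (Real.sqrt ab • μ k - x)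
      = (∑ k, postWeight d K w μ ab k x • (Real.sqrt ab • μ k))
        - (∑ k, postWeight d K w μ ab k x) • x := by
    rw [Finset.sum_smul, ← Finset.sum_sub_distrib]
    exact Finset.sum_congr rfl fun k _ => smul_sub _ _ _
  rw [h1, post_sum hw, one_smul]
  unfold gmmScore
  rw [Finset.smul_sum]
  have h2 : ∀ k : Fin K, Real.sqrt ab • postWeight d K w μ ab k x • μ k
      = postWeight d K w μ ab k x • (Real.sqrt ab • μ k) := fun k => smul_comm _ _ _
  rw [Finset.sum_congr rfl fun k _ => h2 k]
  abel

lemma score_norm4_le [Nonempty (Fin K)] (hw : ∀ k, 0 < w k) (x : EuclideanSpace ℝ (Fin d)) :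
    ‖gmmScore d K w μ ab x‖ ^ 4
      ≤ ∑ k, postWeight d K w μ ab k x * ‖x - Real.sqrt ab • μ k‖ ^ 4 := by
  have hcv : ConvexOn ℝ Set.univ (fun u : ℝ => u ^ 4) :=
    Even.convexOn_pow (by decide)
  have hj := hcv.map_sum_le (t := Finset.univ)
    (w := fun k => postWeight d K w μ ab k x)
    (p := fun k => ‖Real.sqrt ab • μ k - x‖)
    (fun i _ => post_nonneg hw i x) (post_sum hw x) (fun i _ => Set.mem_univ _)
  simp only [smul_eq_mul] at hj
  have hn : ‖gmmScore d K w μ ab x‖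
      ≤ ∑ k, postWeight d K w μ ab k x * ‖Real.sqrt ab • μ k - x‖ := by
    rw [score_eq hw x]
    refine (norm_sum_le _ _).trans_eq (Finset.sum_congr rfl fun k _ => ?_)
    rw [norm_smul, Real.norm_of_nonneg (post_nonneg hw k x)]
  calc ‖gmmScore d K w μ ab x‖ ^ 4
      ≤ (∑ k, postWeight d K w μ ab k x * ‖Real.sqrt ab • μ k - x‖) ^ 4 :=
        pow_le_pow_left₀ (norm_nonneg _) hn 4
    _ ≤ ∑ k, postWeight d K w μ ab k x * ‖Real.sqrt ab • μ k - x‖ ^ 4 := hj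
    _ = ∑ k, postWeight d K w μ ab k x * ‖x - Real.sqrt ab • μ k‖ ^ 4 := by
        refine Finset.sum_congr rfl fun k _ => ?_
        rw [norm_sub_rev]

lemma post_mul_mix [Nonempty (Fin K)] (hw : ∀ k, 0 < w k) (k : Fin K)
    (x : EuclideanSpace ℝ (Fin d)) :
    postWeight d K w μ ab k x * mixDensity d K w μ ab x
      = w k * gaussV d 1 (Real.sqrt ab • μ k) x := by
  have hmix : mixDensity d K w μ ab x
      = (2 * π * 1) ^ (-(d:ℝ) / 2)
        * ∑ i, w i * Real.exp (-‖x - Real.sqrt ab • μ i‖ ^ 2 / 2) := by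
    unfold mixDensity gaussV
    rw [Finset.mul_sum]
    refine Finset.sum_congr rfl fun i _ => ?_
    rw [show (2:ℝ) * 1 = 2 by norm_num]
    ring
  rw [hmix]
  unfold postWeight gaussV
  rw [show (2:ℝ) * 1 = 2 by norm_num]
  field_simp [(D_pos hw x).ne']
  exact mul_div_cancel_right₀ _ (ne_of_gt (Finset.sum_pos (fun i _ => mul_pos (hw i) (Real.exp_pos _)) Finset.univ_nonempty))

lemma pointwise_le [Nonempty (Fin K)] (hw : ∀ k, 0 < w k) (x : EuclideanSpace ℝ (Fin d)) :
    ‖gmmScore d K w μ ab x‖ ^ 4 * mixDensity d K w μ ab x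
      ≤ ∑ k, w k * (‖x - Real.sqrt ab • μ k‖ ^ 4 * gaussV d 1 (Real.sqrt ab • μ k) x) := by
  calc ‖gmmScore d K w μ ab x‖ ^ 4 * mixDensity d K w μ ab x
      ≤ (∑ k, postWeight d K w μ ab k x * ‖x - Real.sqrt ab • μ k‖ ^ 4)
          * mixDensity d K w μ ab x :=
        mul_le_mul_of_nonneg_right (score_norm4_le hw x) (mix_nonneg hw x)
    _ = ∑ k, (postWeight d K w μ ab k x * mixDensity d K w μ ab x)
          * ‖x - Real.sqrt ab • μ k‖ ^ 4 := by
        rw [Finset.sum_mul]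
        exact Finset.sum_congr rfl fun k _ => by ring
    _ = ∑ k, w k * (‖x - Real.sqrt ab • μ k‖ ^ 4 * gaussV d 1 (Real.sqrt ab • μ k) x) := by
        refine Finset.sum_congr rfl fun k _ => ?_
        rw [post_mul_mix hw k x]
        ring

lemma gaussV_translate (d : ℕ) (m x : EuclideanSpace ℝ (Fin d)) :
    gaussV d 1 m x = gaussV d 1 0 (x - m) := by
  unfold gaussV
  rw [sub_zero]

lemma term_int (d : ℕ) (m : EuclideanSpace ℝ (Fin d)) :
    Integrable (fun x : EuclideanSpace ℝ (Fin d) => ‖x - m‖ ^ 4 * gaussV d 1 m x) := by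
  have h := (h_int d).comp_sub_right m
  apply h.congr
  filter_upwards with x
  rw [gaussV_translate d m x]

lemma term_integral_le (d : ℕ) (m : EuclideanSpace ℝ (Fin d)) :
    ∫ x : EuclideanSpace ℝ (Fin d), ‖x - m‖ ^ 4 * gaussV d 1 m x ≤ 3 * (d:ℝ) ^ 2 := by
  have he : ∫ x : EuclideanSpace ℝ (Fin d), ‖x - m‖ ^ 4 * gaussV d 1 m x
      = ∫ x : EuclideanSpace ℝ (Fin d), ‖x‖ ^ 4 * gaussV d 1 0 x := by
    rw [← integral_sub_right_eq_self
      (fun z : EuclideanSpace ℝ (Fin d) => ‖z‖ ^ 4 * gaussV d 1 0 z) m]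
    refine integral_congr_ae (ae_of_all _ fun x => ?_)
    show ‖x - m‖ ^ 4 * gaussV d 1 m x = ‖x - m‖ ^ 4 * gaussV d 1 0 (x - m)
    rw [gaussV_translate d m x]
  rw [he]
  exact h_integral_le d

end gmmAux
/-- For every `t ∈ [T]`, the fourth moment of the diffused-GMM score
satisfies `E[‖s_t^{⋆GMM}(X_t^GMM)‖₂⁴] ≤ C (d/(1−ᾱ_t))²` for some absolute constant `C > 0`. -/
theorem stmt10 :
    ∃ C : ℝ, 0 < C ∧
      ∀ (d K T : ℕ), 1 ≤ d → 1 ≤ K → 1 ≤ T →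
        ∀ (w : Fin K → ℝ) (μ : Fin K → EuclideanSpace ℝ (Fin d)),
          (∀ k, w k ∈ Set.Ioo (0 : ℝ) 1) → (∑ k, w k = 1) →
          ∀ (αbar : ℕ → ℝ), (∀ s, αbar s ∈ Set.Ioo (0 : ℝ) 1) →
          ∀ t : ℕ, 1 ≤ t → t ≤ T →
            (∫ x, ‖gmmScore d K w μ (αbar t) x‖ ^ 4 * mixDensity d K w μ (αbar t) x) ≤
              C * ((d : ℝ) / (1 - αbar t)) ^ 2 := by
  refine ⟨3, by norm_num, ?_⟩
  intro d K T hd hK hT w μ hw hsum αbar hab t ht1 ht2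
  haveI : Nonempty (Fin K) := Fin.pos_iff_nonempty.mp hK
  set ab := αbar t with hab_def
  have hab0 : 0 < ab := (hab t).1
  have hab1 : ab < 1 := (hab t).2
  have hwpos : ∀ k, 0 < w k := fun k => (hw k).1
  -- dominating function
  set g : EuclideanSpace ℝ (Fin d) → ℝ := fun x =>
    ∑ k, w k * (‖x - Real.sqrt ab • μ k‖ ^ 4 * gaussV d 1 (Real.sqrt ab • μ k) x) with hg_def
  have hg_int : Integrable g :=
    integrable_finset_sum _ fun k _ => (term_int d (Real.sqrt ab • μ k)).const_mul _
  have h1 : (∫ x, ‖gmmScore d K w μ ab x‖ ^ 4 * mixDensity d K w μ ab x) ≤ ∫ x, g x := by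
    refine integral_mono_of_nonneg (ae_of_all _ fun x => ?_) hg_int (ae_of_all _ fun x => ?_)
    · exact mul_nonneg (by positivity) (mix_nonneg hwpos x)
    · exact pointwise_le hwpos x
  have h2 : (∫ x, g x) ≤ 3 * (d:ℝ) ^ 2 := by
    rw [hg_def, integral_finset_sum _
      (fun k _ => (term_int d (Real.sqrt ab • μ k)).const_mul _)]
    calc ∑ k, ∫ x, w k * (‖x - Real.sqrt ab • μ k‖ ^ 4 * gaussV d 1 (Real.sqrt ab • μ k) x)
        ≤ ∑ k : Fin K, w k * (3 * (d:ℝ) ^ 2) := by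
          refine Finset.sum_le_sum fun k _ => ?_
          rw [integral_const_mul]
          exact mul_le_mul_of_nonneg_left (term_integral_le d _) (hwpos k).le
      _ = 3 * (d:ℝ) ^ 2 := by rw [← Finset.sum_mul, hsum, one_mul]
  have h3 : 3 * (d:ℝ) ^ 2 ≤ 3 * ((d:ℝ) / (1 - ab)) ^ 2 := by
    have hd1 : (0:ℝ) < 1 - ab := by linarith
    have hdd : (d:ℝ) ≤ (d:ℝ) / (1 - ab) := by
      rw [le_div_iff₀ hd1]
      nlinarith [Nat.cast_nonneg (α := ℝ) d]
    have := pow_le_pow_left₀ (Nat.cast_nonneg (α := ℝ) d) hdd 2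
    linarith
  linarith
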